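/- For every n ≥ 1 and every ξ ∈ ℂ with |ξ − z₁| = ρ₁, one has 1/conj(ξ − z₂,ₙ₋₁) = (1/(λ₁,ₙ₋₁·conj(z₁ − z₂)))·[1 − (ρ₁²/(λ₁,ₙ₋₁·conj(z₁ − z₂)))·1/(ξ − z₁,ₙ)]. -/

import Mathlib

private lemma seq_bounds (ρ ρ₁ ρ₂ : ℝ) (hρ₁ : 0 < ρ₁) (hρ₂ : 0 < ρ₂)
    (hsum : ρ₁ + ρ₂ < ρ)
    (Λ₁ Λ₂ : ℝ) (hΛ₁ : Λ₁ = (ρ₁ / ρ) ^ 2) (hΛ₂ : Λ₂ = (ρ₂ / ρ) ^ 2)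
    (l₁ l₂ : ℕ → ℝ) (hl₁0 : l₁ 0 = 1) (hl₂0 : l₂ 0 = 1)
    (hl₁ : ∀ n : ℕ, l₁ (n + 1) = 1 - Λ₂ / l₂ n)
    (hl₂ : ∀ n : ℕ, l₂ (n + 1) = 1 - Λ₁ / l₁ n) :
    ∀ n, 1 - ρ₂/ρ ≤ l₁ n ∧ 1 - ρ₁/ρ ≤ l₂ n := by
  have hρ0 : 0 < ρ := by linarith
  intro n
  induction n with
  | zero =>
    rw [hl₁0, hl₂0]
    constructor <;> nlinarith [div_pos hρ₂ hρ0, div_pos hρ₁ hρ0]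
  | succ n ih =>
    obtain ⟨ih1, ih2⟩ := ih
    have h1 : 0 < l₁ n := by
      have : ρ₂/ρ < 1 := by rw [div_lt_one hρ0]; linarith
      linarith
    have h2 : 0 < l₂ n := by
      have : ρ₁/ρ < 1 := by rw [div_lt_one hρ0]; linarith
      linarith
    have hm1 : ρ - ρ₂ ≤ l₁ n * ρ := by
      have := mul_le_mul_of_nonneg_right ih1 hρ0.le
      rw [sub_mul, one_mul, div_mul_cancel₀ _ hρ0.ne'] at this
      linarith
    have hm2 : ρ - ρ₁ ≤ l₂ n * ρ := by
      have := mul_le_mul_of_nonneg_right ih2 hρ0.le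
      rw [sub_mul, one_mul, div_mul_cancel₀ _ hρ0.ne'] at this
      linarith
    constructor
    · rw [hl₁ n]
      have key : Λ₂ / l₂ n ≤ ρ₂/ρ := by
        rw [div_le_div_iff₀ h2 hρ0, hΛ₂, div_pow, div_mul_eq_mul_div,
          div_le_iff₀ (by positivity)]
        nlinarith [mul_le_mul_of_nonneg_right (mul_le_mul_of_nonneg_left hm2 hρ₂.le) hρ0.le, mul_pos hρ₂ hρ0]
      linarith
    · rw [hl₂ n]
      have key : Λ₁ / l₁ n ≤ ρ₁/ρ := by
        rw [div_le_div_iff₀ h1 hρ0, hΛ₁, div_pow, div_mul_eq_mul_div,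
          div_le_iff₀ (by positivity)]
        nlinarith [mul_le_mul_of_nonneg_right (mul_le_mul_of_nonneg_left hm1 hρ₁.le) hρ0.le, mul_pos hρ₁ hρ0]
      linarith

private lemma key_alg (w wb cC cb aC ΛC p : ℂ)
    (ha : aC ≠ 0) (hcb : cb ≠ 0)
    (hne : wb + aC * cb ≠ 0)
    (hw : w * wb = p) (hΛ : ΛC * (cC * cb) = p) (hwne : w ≠ 0) :
    1 / (wb + aC * cb) =
      (1 / (aC * cb)) * (1 - (p / (aC * cb)) * (1 / (w + (ΛC/aC) * cC))) := by
  have hD : w + (ΛC/aC) * cC = w * (aC * cb + wb) / (aC * cb) := by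
    rw [eq_div_iff (mul_ne_zero ha hcb)]
    have h1 : aC⁻¹ * aC = 1 := inv_mul_cancel₀ ha
    linear_combination hΛ - hw + (ΛC * cC * cb) * h1
  rw [hD]
  have hprod : w * (aC * cb + wb) ≠ 0 := mul_ne_zero hwne (by rwa [add_comm])
  have hX : aC * cb + wb ≠ 0 := by rwa [add_comm]
  field_simp
  linear_combination (-(aC*cb) - wb) * hw

theorem inverse_conj_expansion_on_circle
    (z₁ z₂ : ℂ) (hz : z₁ ≠ z₂) (ρ ρ₁ ρ₂ : ℝ)
    (hρ : ρ = ‖z₁ - z₂‖)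
    (hρ₁ : 0 < ρ₁) (hρ₂ : 0 < ρ₂) (hsum : ρ₁ + ρ₂ < ρ)
    (Λ₁ Λ₂ Λ : ℝ) (hΛ₁ : Λ₁ = (ρ₁ / ρ) ^ 2) (hΛ₂ : Λ₂ = (ρ₂ / ρ) ^ 2)
    (hΛ : Λ = (Λ₁ - Λ₂) ^ 2 + 1 - 2 * (Λ₁ + Λ₂))
    (l₁ l₂ : ℕ → ℝ) (hl₁0 : l₁ 0 = 1) (hl₂0 : l₂ 0 = 1)
    (hl₁ : ∀ n : ℕ, l₁ (n + 1) = 1 - Λ₂ / l₂ n)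
    (hl₂ : ∀ n : ℕ, l₂ (n + 1) = 1 - Λ₁ / l₁ n)
    (z1s z2s : ℕ → ℂ)
    (hz1s : ∀ n : ℕ, z1s n = ((1 - l₂ n : ℝ) : ℂ) * z₂ + ((l₂ n : ℝ) : ℂ) * z₁)
    (hz2s : ∀ n : ℕ, z2s n = ((1 - l₁ n : ℝ) : ℂ) * z₁ + ((l₁ n : ℝ) : ℂ) * z₂) :
    ∀ n : ℕ, 1 ≤ n → ∀ ξ : ℂ, ‖ξ - z₁‖ = ρ₁ →
      1 / starRingEnd ℂ (ξ - z2s (n - 1)) =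
        (1 / (((l₁ (n - 1) : ℝ) : ℂ) * starRingEnd ℂ (z₁ - z₂))) *
          (1 - (((ρ₁ ^ 2 : ℝ) : ℂ) / (((l₁ (n - 1) : ℝ) : ℂ) * starRingEnd ℂ (z₁ - z₂))) *
            (1 / (ξ - z1s n))) := by
  have hρ0 : 0 < ρ := by linarith
  have hb1 : ∀ m, 1 - ρ₂ / ρ ≤ l₁ m := fun m =>
    (seq_bounds ρ ρ₁ ρ₂ hρ₁ hρ₂ hsum Λ₁ Λ₂ hΛ₁ hΛ₂ l₁ l₂ hl₁0 hl₂0 hl₁ hl₂ m).1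
  intro n hn ξ hξ
  obtain ⟨m, rfl⟩ : ∃ m, n = m + 1 := ⟨n - 1, (Nat.succ_pred_eq_of_pos hn).symm⟩
  simp only [Nat.add_sub_cancel]
  set w := ξ - z₁ with hwdef
  set cC := z₁ - z₂ with hcdef
  set wb := starRingEnd ℂ w with hwbdef
  set cb := starRingEnd ℂ cC with hcbdef
  have haR : 0 < l₁ m := by
    have h := hb1 m
    have : ρ₂ / ρ < 1 := by rw [div_lt_one hρ0]; linarith
    linarith
  have hmρ : ρ - ρ₂ ≤ l₁ m * ρ := by
    have := mul_le_mul_of_nonneg_right (hb1 m) hρ0.le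
    rw [sub_mul, one_mul, div_mul_cancel₀ _ hρ0.ne'] at this
    linarith
  have ha : ((l₁ m : ℝ) : ℂ) ≠ 0 := Complex.ofReal_ne_zero.mpr haR.ne'
  have hcb : cb ≠ 0 := by
    simp only [hcbdef, map_ne_zero]
    exact sub_ne_zero.mpr hz
  have hwne : w ≠ 0 := by
    intro h
    rw [h] at hξ
    simp at hξ
    linarith
  have hw : w * wb = ((ρ₁ ^ 2 : ℝ) : ℂ) := by
    rw [hwbdef, Complex.mul_conj, Complex.normSq_eq_norm_sq, hξ]
  have hcc : cC * cb = ((ρ ^ 2 : ℝ) : ℂ) := by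
    rw [hcbdef, Complex.mul_conj, Complex.normSq_eq_norm_sq, ← hρ]
  have hΛc : ((Λ₁ : ℝ) : ℂ) * (cC * cb) = ((ρ₁ ^ 2 : ℝ) : ℂ) := by
    rw [hcc]
    have : Λ₁ * ρ ^ 2 = ρ₁ ^ 2 := by
      rw [hΛ₁]; field_simp
    exact_mod_cast congrArg (Complex.ofReal) this
  have hne : wb + ((l₁ m : ℝ) : ℂ) * cb ≠ 0 := by
    intro h
    have habs : ‖wb‖ = ‖((l₁ m : ℝ) : ℂ) * cb‖ := by
      rw [eq_neg_of_add_eq_zero_left h, norm_neg]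
    rw [hwbdef, Complex.norm_conj, hξ, norm_mul, Complex.norm_real, Real.norm_eq_abs, hcbdef,
      Complex.norm_conj, ← hρ, abs_of_pos haR] at habs
    nlinarith
  have e1 : ξ - z2s m = w + ((l₁ m : ℝ) : ℂ) * cC := by
    rw [hz2s m]; push_cast; ring
  have e2 : ξ - z1s (m + 1) = w + (((Λ₁ : ℝ) : ℂ) / ((l₁ m : ℝ) : ℂ)) * cC := by
    rw [hz1s (m + 1), hl₂ m]; push_cast; ring
  have econj : starRingEnd ℂ (ξ - z2s m) = wb + ((l₁ m : ℝ) : ℂ) * cb := by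
    rw [e1, map_add, map_mul, Complex.conj_ofReal]
  rw [econj, e2]
  exact key_alg w wb cC cb _ _ _ ha hcb hne hw hΛc hwne
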